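/- arXiv:2604.00306 — 6 statements merged into one kernel-verified Lean document; each statement's English description precedes it below -/
import Mathlib

section
/- Let H be a finite-dimensional Hilbert space, P = P* self-adjoint, and 𝒜 a finite family of operators on H closed under taking adjoints. Suppose γ : ℝ → [0,∞) satisfies the KMS balance condition γ(−ω) = e^{ω} γ(ω) for all ω. Define the Davies dissipator 𝒟(T) = Σ_{A∈𝒜} Σ_{ν∈ℬ(P)} γ(ν) ( A_ν T A_ν* − ½(A_ν* A_ν T + T A_ν* A_ν) ), where ℬ(P) is the Bohr spectrum and A_ν = Σ_{E₂-E₁=ν} 1_{E₂}(P) A 1_{E₁}(P). Then 𝒟(e^{−P}) = 0. -/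
open scoped BigOperators

noncomputable def bohrComponent {H : Type*} [NormedAddCommGroup H] [InnerProductSpace ℂ H]
    (S : Finset ℝ) (π : ℝ → H →L[ℂ] H) (A : H →L[ℂ] H) (ν : ℝ) : H →L[ℂ] H :=
  ∑ E₂ ∈ S, ∑ E₁ ∈ S, if E₂ - E₁ = ν then π E₂ * A * π E₁ else 0

section Aux

variable {H : Type*} [NormedAddCommGroup H] [InnerProductSpace ℂ H]
    [FiniteDimensional ℂ H] [CompleteSpace H]
    (S : Finset ℝ) (π : ℝ → H →L[ℂ] H) (P : H →L[ℂ] H)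

/-- `P * π E = E • π E`. -/
lemma aux_P_mul_proj
    (hP : P = ∑ E ∈ S, (E : ℂ) • π E)
    (hproj : ∀ E ∈ S, ∀ E' ∈ S, π E * π E' = if E = E' then π E else 0)
    {E : ℝ} (hE : E ∈ S) : P * π E = (E : ℂ) • π E := by
  rw [hP, Finset.sum_mul]
  have h1 : ∀ E' ∈ S, ((E' : ℂ) • π E') * π E = if E' = E then (E' : ℂ) • π E' else 0 := by
    intro E' hE'
    rw [smul_mul_assoc, hproj E' hE' E hE]
    split_ifs with h <;> simp [h]
  rw [Finset.sum_congr rfl h1, Finset.sum_ite_eq' S E (fun E' => (E' : ℂ) • π E'), if_pos hE]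

/-- `π E * P = E • π E`. -/
lemma aux_proj_mul_P
    (hP : P = ∑ E ∈ S, (E : ℂ) • π E)
    (hproj : ∀ E ∈ S, ∀ E' ∈ S, π E * π E' = if E = E' then π E else 0)
    {E : ℝ} (hE : E ∈ S) : π E * P = (E : ℂ) • π E := by
  rw [hP, Finset.mul_sum]
  have h1 : ∀ E' ∈ S, π E * ((E' : ℂ) • π E') = if E = E' then (E' : ℂ) • π E else 0 := by
    intro E' hE'
    rw [mul_smul_comm, hproj E hE E' hE']
    split_ifs with h <;> simp [h]
  rw [Finset.sum_congr rfl h1, Finset.sum_ite_eq S E (fun E' => (E' : ℂ) • π E), if_pos hE]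

lemma aux_exp_mul_proj
    (hP : P = ∑ E ∈ S, (E : ℂ) • π E)
    (hproj : ∀ E ∈ S, ∀ E' ∈ S, π E * π E' = if E = E' then π E else 0)
    {E : ℝ} (hE : E ∈ S) :
    NormedSpace.exp (-P) * π E = (Real.exp (-E) : ℂ) • π E := by
  have hpow : ∀ n : ℕ, (-P) ^ n * π E = ((-E : ℂ)) ^ n • π E := by
    intro n
    induction n with
    | zero => simp
    | succ n ih =>
      rw [pow_succ, mul_assoc, neg_mul, aux_P_mul_proj S π P hP hproj hE, mul_neg,
        mul_smul_comm, ih, smul_smul, ← neg_smul]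
      congr 1
      ring
  have hsum : Summable fun n : ℕ => ((n.factorial : ℂ)⁻¹ * (-E : ℂ) ^ n) := by
    simpa [smul_eq_mul] using NormedSpace.expSeries_summable' (𝕂 := ℂ) ((-E : ℂ))
  have h1 : NormedSpace.exp (-P) * π E
      = ∑' n : ℕ, ((n.factorial : ℂ)⁻¹ • (-P) ^ n) * π E := by
    rw [NormedSpace.exp_eq_tsum ℂ]
    exact ((NormedSpace.expSeries_summable' (𝕂 := ℂ) (-P)).tsum_mul_right (π E)).symm
  rw [h1]
  have h2 : ∀ n : ℕ, ((n.factorial : ℂ)⁻¹ • (-P) ^ n) * π E = ((n.factorial : ℂ)⁻¹ * (-E : ℂ) ^ n) • π E := by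
    intro n
    rw [smul_mul_assoc, hpow n, smul_smul]
  rw [tsum_congr h2, hsum.tsum_smul_const (π E)]
  congr 1
  have h3 : (∑' n : ℕ, ((n.factorial : ℂ)⁻¹ * (-E : ℂ) ^ n)) = NormedSpace.exp ((-E : ℂ)) := by
    rw [NormedSpace.exp_eq_tsum ℂ]
    simp [smul_eq_mul]
  rw [h3, ← Complex.exp_eq_exp_ℂ, ← Complex.ofReal_neg, ← Complex.ofReal_exp]

lemma aux_proj_mul_exp
    (hP : P = ∑ E ∈ S, (E : ℂ) • π E)
    (hproj : ∀ E ∈ S, ∀ E' ∈ S, π E * π E' = if E = E' then π E else 0)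
    {E : ℝ} (hE : E ∈ S) :
    π E * NormedSpace.exp (-P) = (Real.exp (-E) : ℂ) • π E := by
  have hpow : ∀ n : ℕ, π E * (-P) ^ n = ((-E : ℂ)) ^ n • π E := by
    intro n
    induction n with
    | zero => simp
    | succ n ih =>
      rw [pow_succ', ← mul_assoc, mul_neg, aux_proj_mul_P S π P hP hproj hE, neg_mul,
        smul_mul_assoc, ih, smul_smul, ← neg_smul]
      congr 1
      ring
  have hsum : Summable fun n : ℕ => ((n.factorial : ℂ)⁻¹ * (-E : ℂ) ^ n) := by
    simpa [smul_eq_mul] using NormedSpace.expSeries_summable' (𝕂 := ℂ) ((-E : ℂ))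
  have h1 : π E * NormedSpace.exp (-P)
      = ∑' n : ℕ, π E * ((n.factorial : ℂ)⁻¹ • (-P) ^ n) := by
    rw [NormedSpace.exp_eq_tsum ℂ]
    exact ((NormedSpace.expSeries_summable' (𝕂 := ℂ) (-P)).tsum_mul_left (π E)).symm
  rw [h1]
  have h2 : ∀ n : ℕ, π E * ((n.factorial : ℂ)⁻¹ • (-P) ^ n) = ((n.factorial : ℂ)⁻¹ * (-E : ℂ) ^ n) • π E := by
    intro n
    rw [mul_smul_comm, hpow n, smul_smul]
  rw [tsum_congr h2, hsum.tsum_smul_const (π E)]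
  congr 1
  have h3 : (∑' n : ℕ, ((n.factorial : ℂ)⁻¹ * (-E : ℂ) ^ n)) = NormedSpace.exp ((-E : ℂ)) := by
    rw [NormedSpace.exp_eq_tsum ℂ]
    simp [smul_eq_mul]
  rw [h3, ← Complex.exp_eq_exp_ℂ, ← Complex.ofReal_neg, ← Complex.ofReal_exp]

/-- Commutation of the Gibbs operator with a Bohr component. -/
lemma aux_exp_mul_bohr
    (hP : P = ∑ E ∈ S, (E : ℂ) • π E)
    (hproj : ∀ E ∈ S, ∀ E' ∈ S, π E * π E' = if E = E' then π E else 0)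
    (A : H →L[ℂ] H) (ν : ℝ) :
    NormedSpace.exp (-P) * bohrComponent S π A ν
      = (Real.exp (-ν) : ℂ) • (bohrComponent S π A ν * NormedSpace.exp (-P)) := by
  unfold bohrComponent
  rw [Finset.mul_sum, Finset.sum_mul, Finset.smul_sum]
  refine Finset.sum_congr rfl fun E₂ h2 => ?_
  rw [Finset.mul_sum, Finset.sum_mul, Finset.smul_sum]
  refine Finset.sum_congr rfl fun E₁ h1 => ?_
  rw [mul_ite, mul_zero, ite_mul, zero_mul, smul_ite, smul_zero]
  by_cases h : E₂ - E₁ = ν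
  · rw [if_pos h, if_pos h]
    rw [← mul_assoc, ← mul_assoc, aux_exp_mul_proj S π P hP hproj h2]
    rw [mul_assoc, mul_assoc, aux_proj_mul_exp S π P hP hproj h1]
    simp only [smul_mul_assoc, mul_smul_comm, smul_smul, mul_assoc]
    congr 1
    rw [← Complex.ofReal_mul, ← Real.exp_add]
    norm_cast
    congr 1
    linarith
  · rw [if_neg h, if_neg h]

/-- The adjoint of a Bohr component. -/
lemma aux_adjoint_bohr
    (hprojsa : ∀ E ∈ S, IsSelfAdjoint (π E))
    (A : H →L[ℂ] H) (ν : ℝ) :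
    ContinuousLinearMap.adjoint (bohrComponent S π A ν)
      = bohrComponent S π (ContinuousLinearMap.adjoint A) (-ν) := by
  rw [← ContinuousLinearMap.star_eq_adjoint, ← ContinuousLinearMap.star_eq_adjoint]
  unfold bohrComponent
  rw [star_sum]
  rw [Finset.sum_comm]
  refine Finset.sum_congr rfl fun E₂ h2 => ?_
  rw [star_sum]
  refine Finset.sum_congr rfl fun E₁ h1 => ?_
  by_cases h : E₂ - E₁ = ν
  · have h' : E₁ - E₂ = -ν := by linarith
    rw [if_pos h, if_pos h', star_mul, star_mul]
    rw [(hprojsa _ h1).star_eq, (hprojsa _ h2).star_eq, ← mul_assoc]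
  · have h' : ¬(E₁ - E₂ = -ν) := fun hc => h (by linarith)
    rw [if_neg h, if_neg h', star_zero]

end Aux

/-- The Davies dissipator annihilates the Gibbs state: for `P` self-adjoint on a
finite-dimensional Hilbert space, a finite family `𝒜` of operators closed under adjoints, and
`γ ≥ 0` satisfying the KMS balance condition `γ(−ω) = e^{ω} γ(ω)`,
`𝒟(T) = Σ_{A∈𝒜} Σ_{ν∈ℬ(P)} γ(ν)(A_ν T A_ν* − ½{A_ν* A_ν, T})` satisfies `𝒟(e^{−P}) = 0`. -/
theorem davies_dissipator_gibbs {H : Type*} [NormedAddCommGroup H] [InnerProductSpace ℂ H]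
    [FiniteDimensional ℂ H] [CompleteSpace H]
    (S : Finset ℝ) (π : ℝ → H →L[ℂ] H) (P : H →L[ℂ] H)
    (𝒜 : Finset (H →L[ℂ] H))
    (hPsa : IsSelfAdjoint P)
    (hP : P = ∑ E ∈ S, (E : ℂ) • π E)
    (hproj : ∀ E ∈ S, ∀ E' ∈ S, π E * π E' = if E = E' then π E else 0)
    (hprojsa : ∀ E ∈ S, IsSelfAdjoint (π E))
    (hsum : ∑ E ∈ S, π E = 1)
    (h𝒜 : ∀ A ∈ 𝒜, ContinuousLinearMap.adjoint A ∈ 𝒜)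
    (γ : ℝ → ℝ) (hγpos : ∀ ω, 0 ≤ γ ω)
    (hbal : ∀ ω, γ (-ω) = Real.exp ω * γ ω) :
    ∑ A ∈ 𝒜, ∑ ν ∈ (S ×ˢ S).image (fun p => p.1 - p.2),
      (γ ν : ℂ) •
        (bohrComponent S π A ν * NormedSpace.exp (-P)
            * ContinuousLinearMap.adjoint (bohrComponent S π A ν)
          - (1/2 : ℂ) •
            (ContinuousLinearMap.adjoint (bohrComponent S π A ν) * bohrComponent S π A ν
                * NormedSpace.exp (-P)
              + NormedSpace.exp (-P)
                * (ContinuousLinearMap.adjoint (bohrComponent S π A ν)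
                    * bohrComponent S π A ν))) = 0 := by
  classical
  set G : H →L[ℂ] H := NormedSpace.exp (-P) with hG
  set ℬ : Finset ℝ := (S ×ˢ S).image (fun p => p.1 - p.2) with hB
  set f : (H →L[ℂ] H) → ℝ → (H →L[ℂ] H) := fun B μ =>
    (γ μ : ℂ) • (ContinuousLinearMap.adjoint (bohrComponent S π B μ)
      * bohrComponent S π B μ * G) with hf
  have hBneg : ∀ ν ∈ ℬ, -ν ∈ ℬ := by
    intro ν hν
    rw [hB, Finset.mem_image] at hν ⊢
    obtain ⟨p, hp, hpe⟩ := hν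
    rw [Finset.mem_product] at hp
    exact ⟨(p.2, p.1), Finset.mem_product.mpr ⟨hp.2, hp.1⟩, by simp [← hpe]⟩
  have hGK : ∀ (A : H →L[ℂ] H) (ν : ℝ),
      G * bohrComponent S π A ν
        = (Real.exp (-ν) : ℂ) • (bohrComponent S π A ν * G) :=
    fun A ν => aux_exp_mul_bohr S π P hP hproj A ν
  have hadj : ∀ (A : H →L[ℂ] H) (ν : ℝ),
      ContinuousLinearMap.adjoint (bohrComponent S π A ν)
        = bohrComponent S π (ContinuousLinearMap.adjoint A) (-ν) :=
    fun A ν => aux_adjoint_bohr S π hprojsa A ν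
  -- each summand rewrites as a difference
  have hterm : ∀ (A : H →L[ℂ] H) (ν : ℝ),
      (γ ν : ℂ) •
        (bohrComponent S π A ν * G
            * ContinuousLinearMap.adjoint (bohrComponent S π A ν)
          - (1/2 : ℂ) •
            (ContinuousLinearMap.adjoint (bohrComponent S π A ν) * bohrComponent S π A ν * G
              + G * (ContinuousLinearMap.adjoint (bohrComponent S π A ν)
                  * bohrComponent S π A ν)))
        = f (ContinuousLinearMap.adjoint A) (-ν) - f A ν := by
    intro A ν
    set K := bohrComponent S π A ν with hK
    set K' := bohrComponent S π (ContinuousLinearMap.adjoint A) (-ν) with hK'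
    have hKadj : ContinuousLinearMap.adjoint K = K' := hadj A ν
    have hK'adj : ContinuousLinearMap.adjoint K' = K := by
      rw [hK', hadj, ContinuousLinearMap.adjoint_adjoint, neg_neg]
    have hGK1 : G * K = (Real.exp (-ν) : ℂ) • (K * G) := hGK A ν
    have hGK2 : G * K' = (Real.exp ν : ℂ) • (K' * G) := by
      simpa using hGK (ContinuousLinearMap.adjoint A) (-ν)
    -- G commutes with K' * K
    have hcomm : G * (K' * K) = K' * K * G := by
      rw [← mul_assoc, hGK2, smul_mul_assoc, mul_assoc, hGK1, mul_smul_comm, smul_smul]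
      rw [← Complex.ofReal_mul, ← Real.exp_add, add_neg_cancel, Real.exp_zero]
      rw [Complex.ofReal_one, one_smul, ← mul_assoc]
    -- K G K' = e^ν • (K K' G)
    have hKGK : K * G * K' = (Real.exp ν : ℂ) • (K * K' * G) := by
      rw [mul_assoc, hGK2, mul_smul_comm, ← mul_assoc]
    rw [hKadj, hKGK, hcomm]
    have hhalf : (1/2 : ℂ) • (K' * K * G + K' * K * G) = K' * K * G := by
      rw [← two_smul ℂ (K' * K * G), smul_smul]
      norm_num
    rw [hhalf, smul_sub]
    simp only [hf]
    rw [hK'adj, hKadj]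
    congr 1
    rw [smul_smul]
    congr 1
    rw [hbal ν]
    push_cast
    ring
  calc ∑ A ∈ 𝒜, ∑ ν ∈ ℬ,
      (γ ν : ℂ) •
        (bohrComponent S π A ν * G
            * ContinuousLinearMap.adjoint (bohrComponent S π A ν)
          - (1/2 : ℂ) •
            (ContinuousLinearMap.adjoint (bohrComponent S π A ν) * bohrComponent S π A ν * G
              + G * (ContinuousLinearMap.adjoint (bohrComponent S π A ν)
                  * bohrComponent S π A ν)))
      = ∑ A ∈ 𝒜, ∑ ν ∈ ℬ, (f (ContinuousLinearMap.adjoint A) (-ν) - f A ν) := by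
        exact Finset.sum_congr rfl fun A _ => Finset.sum_congr rfl fun ν _ => hterm A ν
    _ = (∑ A ∈ 𝒜, ∑ ν ∈ ℬ, f (ContinuousLinearMap.adjoint A) (-ν))
        - ∑ A ∈ 𝒜, ∑ ν ∈ ℬ, f A ν := by
        simp [Finset.sum_sub_distrib]
    _ = 0 := by
        rw [sub_eq_zero]
        rw [← Finset.sum_product' (s := 𝒜) (t := ℬ)
          (f := fun A ν => f (ContinuousLinearMap.adjoint A) (-ν)),
          ← Finset.sum_product' (s := 𝒜) (t := ℬ) (f := fun A ν => f A ν)]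
        refine Finset.sum_nbij'
          (fun p => (ContinuousLinearMap.adjoint p.1, -p.2))
          (fun p => (ContinuousLinearMap.adjoint p.1, -p.2)) ?_ ?_ ?_ ?_ ?_
        · intro p hp
          rw [Finset.mem_product] at hp ⊢
          exact ⟨h𝒜 _ hp.1, hBneg _ hp.2⟩
        · intro p hp
          rw [Finset.mem_product] at hp ⊢
          exact ⟨h𝒜 _ hp.1, hBneg _ hp.2⟩
        · intro p _
          simp [ContinuousLinearMap.adjoint_adjoint]
        · intro p _
          simp [ContinuousLinearMap.adjoint_adjoint]
        · intro p _
          rfl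
end

section
/- Let b₁(t) = (1/8)π^{1/2} ∫_0^∞ (e^{−σ²(t+s)²} − e^{−σ²(t−s)²})/sinh(2πs) ds for σ > 0. Then ‖b₁‖_{L¹(ℝ)} ≤ (1/2)π^{1/2} ∫_0^∞ s/sinh(2πs) ds, and in particular ‖b₁‖_{L¹(ℝ)} ≤ (1/32)π^{1/2}, uniformly in σ. -/
open MeasureTheory Real Set

private lemma integral_Ioi_comp_add_right (g : ℝ → ℝ) (a c : ℝ) :
    ∫ t in Ioi a, g (t + c) = ∫ t in Ioi (a + c), g t := by
  have h := (measurePreserving_add_right (volume : Measure ℝ) c).setIntegral_preimage_emb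
    (measurableEmbedding_addRight c) g (Ioi (a + c))
  rw [← h]
  congr 1
  ext x
  simp [add_lt_add_iff_right]

private lemma gauss_diff_L1 {b s : ℝ} (hb : 0 < b) (hs : 0 < s) :
    ∫ t : ℝ, |Real.exp (-b * (t + s)^2) - Real.exp (-b * (t - s)^2)| ≤ 4 * s := by
  set g : ℝ → ℝ := fun u => Real.exp (-b * u^2) with hg
  have hgint : Integrable g := integrable_exp_neg_mul_sq hb
  have hgp : Integrable (fun t => g (t + s)) := hgint.comp_add_right s
  have hgm : Integrable (fun t => g (t - s)) := hgint.comp_sub_right s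
  have hF : Integrable (fun t => |g (t + s) - g (t - s)|) := (hgp.sub hgm).abs
  have hsplit : ∫ t : ℝ, |g (t + s) - g (t - s)|
      = (∫ t in Ioi (0:ℝ), |g (t + s) - g (t - s)|)
        + ∫ t in Iic (0:ℝ), |g (t + s) - g (t - s)| := by
    rw [← compl_Ioi, integral_add_compl measurableSet_Ioi hF]
  have hIic : ∫ t in Iic (0:ℝ), |g (t + s) - g (t - s)|
      = ∫ t in Ioi (0:ℝ), |g (t + s) - g (t - s)| := by
    have h := integral_comp_neg_Ioi (0:ℝ) (fun t => |g (t + s) - g (t - s)|)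
    rw [neg_zero] at h
    rw [← h]
    refine setIntegral_congr_fun measurableSet_Ioi (fun t _ => ?_)
    simp only [hg]
    rw [show (-t + s)^2 = (t - s)^2 by ring, show (-t - s)^2 = (t + s)^2 by ring,
      abs_sub_comm]
  have hIoi : ∫ t in Ioi (0:ℝ), |g (t + s) - g (t - s)|
      = ∫ t in Ioi (0:ℝ), (g (t - s) - g (t + s)) := by
    refine setIntegral_congr_fun measurableSet_Ioi (fun t ht => ?_)
    have hle : g (t + s) ≤ g (t - s) := by
      simp only [hg]
      apply Real.exp_le_exp.mpr
      have ht' : 0 < t := ht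
      nlinarith [mul_pos (mul_pos hb ht') hs]
    rw [abs_of_nonpos (by linarith), neg_sub]
  have hdiff : ∫ t in Ioi (0:ℝ), (g (t - s) - g (t + s))
      = (∫ t in Ioi (-s), g t) - ∫ t in Ioi s, g t := by
    rw [integral_sub hgm.integrableOn hgp.integrableOn]
    congr 1
    · simp_rw [sub_eq_add_neg]
      rw [integral_Ioi_comp_add_right g 0 (-s), zero_add]
    · rw [integral_Ioi_comp_add_right g 0 s, zero_add]
  have hunion : (∫ t in Ioi (-s), g t) - ∫ t in Ioi s, g t = ∫ t in Ioc (-s) s, g t := by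
    have hU : Ioc (-s) s ∪ Ioi s = Ioi (-s) := Ioc_union_Ioi_eq_Ioi (by linarith)
    rw [← hU, setIntegral_union (Ioc_disjoint_Ioi le_rfl) measurableSet_Ioi
      hgint.integrableOn hgint.integrableOn]
    ring
  have hbound : ∫ t in Ioc (-s) s, g t ≤ 2 * s := by
    have h1 : ∫ t in Ioc (-s) s, g t ≤ ∫ _t in Ioc (-s) s, (1:ℝ) := by
      refine setIntegral_mono_on hgint.integrableOn (integrableOn_const ?_)
        measurableSet_Ioc (fun t _ => ?_)
      · rw [Real.volume_Ioc]; exact ENNReal.ofReal_ne_top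
      · simp only [hg]
        exact Real.exp_le_one_iff.mpr (by nlinarith [sq_nonneg t])
    have h2 : ∫ _t in Ioc (-s) s, (1:ℝ) = 2 * s := by
      rw [setIntegral_const, Real.volume_real_Ioc_of_le (by linarith), smul_eq_mul, mul_one]
      ring
    linarith
  calc ∫ t : ℝ, |g (t + s) - g (t - s)| = 2 * ∫ t in Ioc (-s) s, g t := by
        rw [hsplit, hIic, hIoi, hdiff, hunion]; ring
    _ ≤ 4 * s := by linarith

private lemma one_div_sinh_eq {x : ℝ} (hx : 0 < x) :
    1 / Real.sinh x = 2 * Real.exp (-x) * (1 - Real.exp (-(2*x)))⁻¹ := by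
  have hene : Real.exp (-x) ≠ 0 := (Real.exp_pos _).ne'
  have hsp : 0 < Real.sinh x := by rwa [Real.sinh_pos_iff]
  have hd : Real.exp x - Real.exp (-x) ≠ 0 := by
    have := Real.sinh_eq x
    intro h; rw [this, h] at hsp; norm_num at hsp
  have hkey : (Real.exp x - Real.exp (-x)) * Real.exp (-x) = 1 - Real.exp (-(2*x)) := by
    rw [sub_mul, ← Real.exp_add, ← Real.exp_add, add_neg_cancel, Real.exp_zero]
    congr 2
    ring
  rw [Real.sinh_eq, ← hkey]
  field_simp

private lemma hasSum_inv_sinh {x : ℝ} (hx : 0 < x) :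
    HasSum (fun k : ℕ => 2 * Real.exp (-((2 * (k:ℝ) + 1) * x))) (1 / Real.sinh x) := by
  have ha : Real.exp (-(2*x)) < 1 := Real.exp_lt_one_iff.mpr (by linarith)
  have h0 : 0 ≤ Real.exp (-(2*x)) := (Real.exp_pos _).le
  have hgeo := (hasSum_geometric_of_lt_one h0 ha).mul_left (2 * Real.exp (-x))
  have hfun : (fun k : ℕ => 2 * Real.exp (-x) * Real.exp (-(2*x)) ^ k)
      = fun k : ℕ => 2 * Real.exp (-((2 * (k:ℝ) + 1) * x)) := by
    funext k
    rw [← Real.exp_nat_mul, mul_assoc, ← Real.exp_add]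
    congr 1
    ring
  rw [hfun] at hgeo
  rwa [one_div_sinh_eq hx]

private lemma hasSum_term {s : ℝ} (hs : 0 < s) :
    HasSum (fun k : ℕ => 2 * s * Real.exp (-((2 * (k:ℝ) + 1) * (2*π*s))))
      (s / Real.sinh (2*π*s)) := by
  have h := (hasSum_inv_sinh (x := 2*π*s) (by positivity)).mul_left s
  have hf : (fun k : ℕ => 2 * s * Real.exp (-((2 * (k:ℝ) + 1) * (2*π*s))))
      = fun k : ℕ => s * (2 * Real.exp (-((2 * (k:ℝ) + 1) * (2*π*s)))) := by
    funext k; ring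
  rw [hf, ← mul_one_div]; exact h

private lemma hasSum_odd_sq : HasSum (fun k : ℕ => 1 / ((2 * (k:ℝ) + 1))^2) (π^2/8) := by
  set f : ℕ → ℝ := fun n => 1 / (n:ℝ)^2 with hf
  have h : HasSum f (π^2/6) := hasSum_zeta_two
  have heven : HasSum (fun k : ℕ => f (2*k)) (π^2/24) := by
    have h4 := h.mul_left (1/4)
    have : (fun n : ℕ => 1/4 * f n) = fun k : ℕ => f (2*k) := by
      funext k
      simp only [hf]
      push_cast
      rw [mul_one_div, div_div, mul_pow]
      norm_num
    rw [this] at h4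
    rw [show (π^2/24 : ℝ) = 1/4 * (π^2/6) by ring]
    exact h4
  have hoddS : Summable (fun k : ℕ => f (2*k+1)) :=
    h.summable.comp_injective (fun a b hab => by omega)
  have hodd := hoddS.hasSum
  have htot := heven.even_add_odd hodd
  have := htot.unique h
  have hval : ∑' k : ℕ, f (2*k+1) = π^2/8 := by linarith
  rw [hval] at hodd
  convert hodd using 1
  funext k
  simp only [hf]
  push_cast
  ring_nf

private lemma integrableOn_term {c : ℝ} (hc : 0 < c) :
    IntegrableOn (fun s : ℝ => s * Real.exp (-(c * s))) (Ioi 0) := by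
  have h := integrableOn_rpow_mul_exp_neg_mul_rpow (s := 1) (p := 1)
    (by norm_num) one_pos hc
  refine h.congr_fun (fun x hx => ?_) measurableSet_Ioi
  simp only [Real.rpow_one, neg_mul]

private lemma integral_term {c : ℝ} (hc : 0 < c) :
    ∫ s in Ioi (0:ℝ), s * Real.exp (-(c * s)) = 1 / c^2 := by
  have h := Real.integral_rpow_mul_exp_neg_mul_Ioi (a := 2) (r := c) two_pos hc
  rw [Real.Gamma_two] at h
  have heq : ∫ s in Ioi (0:ℝ), s * Real.exp (-(c * s))
      = ∫ t in Ioi (0:ℝ), t ^ ((2:ℝ) - 1) * Real.exp (-(c * t)) := by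
    refine setIntegral_congr_fun measurableSet_Ioi (fun t ht => ?_)
    norm_num [Real.rpow_one]
  rw [heq, h, mul_one, show ((2:ℝ) : ℝ) = ((2:ℕ) : ℝ) by norm_num, Real.rpow_natCast,
    div_pow, one_pow]

private lemma lintegral_term (k : ℕ) :
    (∫⁻ s in Ioi (0:ℝ), ENNReal.ofReal (2 * s * Real.exp (-((2 * (k:ℝ) + 1) * (2*π*s)))))
      = ENNReal.ofReal (2 / (((2 * (k:ℝ) + 1) * (2*π))^2)) := by
  set c : ℝ := (2 * (k:ℝ) + 1) * (2*π) with hcdef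
  have hcpos : 0 < c := by positivity
  have hfun : ∀ s : ℝ, 2 * s * Real.exp (-((2 * (k:ℝ) + 1) * (2*π*s)))
      = 2 * (s * Real.exp (-(c * s))) := by
    intro s
    rw [show (2 * (k:ℝ) + 1) * (2*π*s) = c * s by rw [hcdef]; ring]
    ring
  simp_rw [hfun]
  have hint : IntegrableOn (fun s : ℝ => 2 * (s * Real.exp (-(c * s)))) (Ioi 0) :=
    (integrableOn_term hcpos).const_mul 2
  have hnn : 0 ≤ᵐ[volume.restrict (Ioi (0:ℝ))] fun s : ℝ => 2 * (s * Real.exp (-(c * s))) := by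
    refine (ae_restrict_iff' measurableSet_Ioi).2 (ae_of_all _ fun s hs => ?_)
    have : (0:ℝ) < s := hs
    positivity
  rw [← ofReal_integral_eq_lintegral_ofReal hint hnn, integral_const_mul, integral_term hcpos]
  congr 1
  rw [mul_one_div]

private lemma hasSum_final : HasSum (fun k : ℕ => 2 / (((2 * (k:ℝ) + 1) * (2*π))^2)) (1/16) := by
  have hπ : (π:ℝ) ≠ 0 := Real.pi_ne_zero
  have h := hasSum_odd_sq.mul_left (1/(2*π^2))
  have hfun : (fun k : ℕ => 1/(2*π^2) * (1 / ((2 * (k:ℝ) + 1))^2))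
      = fun k : ℕ => 2 / (((2 * (k:ℝ) + 1) * (2*π))^2) := by
    funext k
    have hk : ((2 * (k:ℝ) + 1))^2 ≠ 0 := by positivity
    field_simp
  rw [hfun] at h
  rw [show (1/16 : ℝ) = 1/(2*π^2) * (π^2/8) by field_simp; ring]
  exact h


private lemma lintegral_s_div_sinh :
    ∫⁻ s in Ioi (0:ℝ), ENNReal.ofReal (s / Real.sinh (2*π*s)) = ENNReal.ofReal (1/16) := by
  have hcongr : (∫⁻ s in Ioi (0:ℝ), ENNReal.ofReal (s / Real.sinh (2*π*s)))
      = ∫⁻ s in Ioi (0:ℝ),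
          ∑' k : ℕ, ENNReal.ofReal (2 * s * Real.exp (-((2 * (k:ℝ) + 1) * (2*π*s)))) := by
    refine setLIntegral_congr_fun measurableSet_Ioi (fun s hs => ?_)
    have hs' : (0:ℝ) < s := hs
    rw [← (hasSum_term hs').tsum_eq,
      ENNReal.ofReal_tsum_of_nonneg (fun k => by positivity) (hasSum_term hs').summable]
  have hmeas : ∀ k : ℕ, AEMeasurable
      (fun s : ℝ => ENNReal.ofReal (2 * s * Real.exp (-((2 * (k:ℝ) + 1) * (2*π*s)))))
      (volume.restrict (Ioi (0:ℝ))) := by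
    intro k
    apply Measurable.aemeasurable
    fun_prop
  rw [hcongr, lintegral_tsum hmeas, tsum_congr lintegral_term,
    ← ENNReal.ofReal_tsum_of_nonneg (fun k => by positivity) hasSum_final.summable,
    hasSum_final.tsum_eq]

private lemma integrableOn_s_div_sinh :
    IntegrableOn (fun s : ℝ => s / Real.sinh (2*π*s)) (Ioi 0) := by
  have hnn : 0 ≤ᵐ[volume.restrict (Ioi (0:ℝ))] fun s : ℝ => s / Real.sinh (2*π*s) := by
    refine (ae_restrict_iff' measurableSet_Ioi).2 (ae_of_all _ fun s hs => ?_)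
    have hs' : (0:ℝ) < s := hs
    have : 0 < Real.sinh (2*π*s) := Real.sinh_pos_iff.mpr (by positivity)
    positivity
  have hm : AEStronglyMeasurable (fun s : ℝ => s / Real.sinh (2*π*s))
      (volume.restrict (Ioi (0:ℝ))) := by
    apply Measurable.aestronglyMeasurable
    fun_prop
  refine ⟨hm, ?_⟩
  rw [hasFiniteIntegral_iff_ofReal hnn, lintegral_s_div_sinh]
  exact ENNReal.ofReal_lt_top

private lemma integral_s_div_sinh :
    ∫ s in Ioi (0:ℝ), s / Real.sinh (2*π*s) = 1/16 := by
  have hnn : 0 ≤ᵐ[volume.restrict (Ioi (0:ℝ))] fun s : ℝ => s / Real.sinh (2*π*s) := by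
    refine (ae_restrict_iff' measurableSet_Ioi).2 (ae_of_all _ fun s hs => ?_)
    have hs' : (0:ℝ) < s := hs
    have : 0 < Real.sinh (2*π*s) := Real.sinh_pos_iff.mpr (by positivity)
    positivity
  have h := ofReal_integral_eq_lintegral_ofReal integrableOn_s_div_sinh hnn
  rw [lintegral_s_div_sinh] at h
  have hpos : (0:ℝ) ≤ ∫ s in Ioi (0:ℝ), s / Real.sinh (2*π*s) := by
    refine setIntegral_nonneg measurableSet_Ioi (fun s hs => ?_)
    have hs' : (0:ℝ) < s := hs
    have : 0 < Real.sinh (2*π*s) := Real.sinh_pos_iff.mpr (by positivity)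
    positivity
  exact (ENNReal.ofReal_eq_ofReal_iff hpos (by norm_num)).mp h

private lemma ofReal_integral_abs_le {f : ℝ → ℝ} (μ : Measure ℝ) :
    ENNReal.ofReal (∫ x, |f x| ∂μ) ≤ ∫⁻ x, ENNReal.ofReal |f x| ∂μ := by
  by_cases h : Integrable (fun x => |f x|) μ
  · exact le_of_eq (ofReal_integral_eq_lintegral_ofReal h (ae_of_all _ fun x => abs_nonneg _))
  · rw [integral_undef h]; simp

/-- The coherent-term profile `b₁(t) = (1/8)√π ∫_0^∞ (e^{−σ²(t+s)²} − e^{−σ²(t−s)²})/sinh(2πs) ds`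
satisfies `‖b₁‖_{L¹} ≤ (1/2)√π ∫_0^∞ s/sinh(2πs) ds ≤ (1/32)√π`, uniformly in `σ > 0`. -/
theorem b1_L1_bound (σ : ℝ) (hσ : 0 < σ) :
    (∫⁻ t : ℝ, ENNReal.ofReal
        |(1/8) * Real.sqrt π * ∫ s in Set.Ioi (0:ℝ),
            (Real.exp (-σ^2 * (t + s)^2) - Real.exp (-σ^2 * (t - s)^2)) / Real.sinh (2*π*s)|
      ≤ ENNReal.ofReal
          ((1/2) * Real.sqrt π * ∫ s in Set.Ioi (0:ℝ), s / Real.sinh (2*π*s)))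
    ∧ (∫⁻ t : ℝ, ENNReal.ofReal
        |(1/8) * Real.sqrt π * ∫ s in Set.Ioi (0:ℝ),
            (Real.exp (-σ^2 * (t + s)^2) - Real.exp (-σ^2 * (t - s)^2)) / Real.sinh (2*π*s)|
      ≤ ENNReal.ofReal ((1/32) * Real.sqrt π)) := by
  have hb : 0 < σ^2 := by positivity
  have hc : (0:ℝ) ≤ (1/8) * Real.sqrt π := by positivity
  set Δ : ℝ → ℝ → ℝ := fun t s =>
    Real.exp (-σ^2 * (t + s)^2) - Real.exp (-σ^2 * (t - s)^2) with hΔ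
  -- Step 1: pointwise bound by iterated lintegral
  have step1 : ∀ t : ℝ, ENNReal.ofReal
      |(1/8) * Real.sqrt π * ∫ s in Ioi (0:ℝ), Δ t s / Real.sinh (2*π*s)|
      ≤ ENNReal.ofReal ((1/8) * Real.sqrt π) *
        ∫⁻ s in Ioi (0:ℝ), ENNReal.ofReal |Δ t s / Real.sinh (2*π*s)| := by
    intro t
    rw [abs_mul, abs_of_nonneg hc, ENNReal.ofReal_mul hc]
    refine mul_le_mul_right ?_ _
    have habs : |∫ s in Ioi (0:ℝ), Δ t s / Real.sinh (2*π*s)|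
        ≤ ∫ s in Ioi (0:ℝ), |Δ t s / Real.sinh (2*π*s)| := by
      simpa only [Real.norm_eq_abs] using norm_integral_le_integral_norm
        (f := fun s => Δ t s / Real.sinh (2*π*s)) (μ := volume.restrict (Ioi (0:ℝ)))
    exact le_trans (ENNReal.ofReal_le_ofReal habs) (ofReal_integral_abs_le _)
  -- measurability of the two-variable kernel
  have hker : AEMeasurable
      (Function.uncurry fun t s : ℝ => ENNReal.ofReal |Δ t s / Real.sinh (2*π*s)|)
      (volume.prod (volume.restrict (Ioi (0:ℝ)))) := by
    apply Measurable.aemeasurable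
    simp only [Function.uncurry, hΔ]
    fun_prop
  -- Step 2: inner bound after swapping
  have step2 : ∀ s : ℝ, s ∈ Ioi (0:ℝ) →
      (∫⁻ t : ℝ, ENNReal.ofReal |Δ t s / Real.sinh (2*π*s)|)
        ≤ ENNReal.ofReal (4 * (s / Real.sinh (2*π*s))) := by
    intro s hs
    have hs' : (0:ℝ) < s := hs
    have hsh : 0 < Real.sinh (2*π*s) := Real.sinh_pos_iff.mpr (by positivity)
    have habs : ∀ t : ℝ, |Δ t s / Real.sinh (2*π*s)|
        = |Δ t s| * (Real.sinh (2*π*s))⁻¹ := by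
      intro t
      rw [abs_div, abs_of_pos hsh, div_eq_mul_inv]
    have hΔint : Integrable (fun t => |Δ t s|) := by
      simp only [hΔ]
      exact (((integrable_exp_neg_mul_sq hb).comp_add_right s).sub
        ((integrable_exp_neg_mul_sq hb).comp_sub_right s)).abs
    calc (∫⁻ t : ℝ, ENNReal.ofReal |Δ t s / Real.sinh (2*π*s)|)
        = ∫⁻ t : ℝ, ENNReal.ofReal (|Δ t s|) * ENNReal.ofReal ((Real.sinh (2*π*s))⁻¹) := by
          refine lintegral_congr (fun t => ?_)
          rw [habs t, ENNReal.ofReal_mul (abs_nonneg _)]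
      _ = (∫⁻ t : ℝ, ENNReal.ofReal (|Δ t s|)) * ENNReal.ofReal ((Real.sinh (2*π*s))⁻¹) :=
          lintegral_mul_const' _ _ ENNReal.ofReal_ne_top
      _ ≤ ENNReal.ofReal (4 * s) * ENNReal.ofReal ((Real.sinh (2*π*s))⁻¹) := by
          refine mul_le_mul_left ?_ _
          rw [← ofReal_integral_eq_lintegral_ofReal hΔint (ae_of_all _ fun t => abs_nonneg _)]
          exact ENNReal.ofReal_le_ofReal (gauss_diff_L1 hb hs')
      _ = ENNReal.ofReal (4 * (s / Real.sinh (2*π*s))) := by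
          rw [← ENNReal.ofReal_mul (by positivity)]
          congr 1
          rw [div_eq_mul_inv]
          ring
  -- final bound for part 1
  have main : (∫⁻ t : ℝ, ENNReal.ofReal
      |(1/8) * Real.sqrt π * ∫ s in Ioi (0:ℝ), Δ t s / Real.sinh (2*π*s)|)
      ≤ ENNReal.ofReal
          ((1/2) * Real.sqrt π * ∫ s in Ioi (0:ℝ), s / Real.sinh (2*π*s)) := by
    calc (∫⁻ t : ℝ, ENNReal.ofReal
        |(1/8) * Real.sqrt π * ∫ s in Ioi (0:ℝ), Δ t s / Real.sinh (2*π*s)|)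
        ≤ ∫⁻ t : ℝ, ENNReal.ofReal ((1/8) * Real.sqrt π) *
            ∫⁻ s in Ioi (0:ℝ), ENNReal.ofReal |Δ t s / Real.sinh (2*π*s)| :=
          lintegral_mono step1
      _ = ENNReal.ofReal ((1/8) * Real.sqrt π) *
            ∫⁻ t : ℝ, ∫⁻ s in Ioi (0:ℝ), ENNReal.ofReal |Δ t s / Real.sinh (2*π*s)| :=
          lintegral_const_mul' _ _ ENNReal.ofReal_ne_top
      _ = ENNReal.ofReal ((1/8) * Real.sqrt π) *
            ∫⁻ s in Ioi (0:ℝ), ∫⁻ t : ℝ, ENNReal.ofReal |Δ t s / Real.sinh (2*π*s)| := by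
          rw [lintegral_lintegral_swap hker]
      _ ≤ ENNReal.ofReal ((1/8) * Real.sqrt π) *
            ∫⁻ s in Ioi (0:ℝ), ENNReal.ofReal (4 * (s / Real.sinh (2*π*s))) := by
          refine mul_le_mul_right ?_ _
          refine lintegral_mono_ae ((ae_restrict_iff' measurableSet_Ioi).2
            (ae_of_all _ step2))
      _ = ENNReal.ofReal ((1/8) * Real.sqrt π) *
            ENNReal.ofReal (∫ s in Ioi (0:ℝ), 4 * (s / Real.sinh (2*π*s))) := by
          congr 1
          rw [← ofReal_integral_eq_lintegral_ofReal (integrableOn_s_div_sinh.const_mul 4) ?_]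
          refine (ae_restrict_iff' measurableSet_Ioi).2 (ae_of_all _ fun s hs => ?_)
          have hs' : (0:ℝ) < s := hs
          have : 0 < Real.sinh (2*π*s) := Real.sinh_pos_iff.mpr (by positivity)
          positivity
      _ = ENNReal.ofReal
            ((1/2) * Real.sqrt π * ∫ s in Ioi (0:ℝ), s / Real.sinh (2*π*s)) := by
          rw [integral_const_mul, ← ENNReal.ofReal_mul hc]
          congr 1
          ring
  refine ⟨main, le_trans main ?_⟩
  have hval : (1/2) * Real.sqrt π * (1/16 : ℝ) = (1/32) * Real.sqrt π := by ring
  rw [integral_s_div_sinh, hval]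
end

section
/- Let σ > 0 and G_σ(x) = σ^{−1}√π e^{−x²/σ²}. Let γ : ℝ → ℝ be continuous with e^{|ω|/2}γ(ω) integrable. Then the convolution identity (γ * G_σ)(τ) = e^{−τ}(γ * G_σ)(−τ) holds for all τ ∈ ℝ if and only if γ has the form γ(ω) = e^{−ω/2} φ(ω + σ²/4) for some even continuous function φ : ℝ → ℝ. -/
open MeasureTheory Real FourierTransform

lemma gaussA_ne_zero (σ : ℝ) (hσ : 0 < σ) (ξ : ℝ) :
    (∫ s : ℝ, Complex.exp (↑(-2 * π * s * ξ) * Complex.I) * ↑(Real.exp (-s ^ 2 / σ ^ 2))) ≠ 0 := by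
  have hσℂ : (σ : ℂ) ≠ 0 := by exact_mod_cast hσ.ne'
  have hcast : (1 / σ ^ 2 : ℂ) = ((1 / σ ^ 2 : ℝ) : ℂ) := by push_cast; ring
  have hb : (0 : ℝ) < ((1 / σ ^ 2 : ℂ)).re := by
    rw [hcast, Complex.ofReal_re]; positivity
  have key := fourierIntegral_gaussian (b := (1 / σ ^ 2 : ℂ)) hb (-2 * π * ξ : ℂ)
  have heq : (fun s : ℝ => Complex.exp (↑(-2 * π * s * ξ) * Complex.I) *
      ↑(Real.exp (-s ^ 2 / σ ^ 2)))
      = fun x : ℝ => Complex.exp (Complex.I * (-2 * π * ξ : ℂ) * x) *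
        Complex.exp (-(1 / σ ^ 2 : ℂ) * (x : ℂ) ^ 2) := by
    funext s
    rw [Complex.ofReal_exp]
    congr 1
    · congr 1; push_cast; ring
    · congr 1; push_cast; field_simp
  have h1 : ((π : ℂ) / (1 / (σ : ℂ) ^ 2)) ≠ 0 := by
    apply div_ne_zero
    · exact_mod_cast Real.pi_ne_zero
    · exact one_div_ne_zero (pow_ne_zero _ hσℂ)
  rw [heq, key]
  exact mul_ne_zero (by simp [h1, Real.pi_ne_zero, hσ.ne']) (Complex.exp_ne_zero _)

lemma myOfReal_integral (g : ℝ → ℝ) : (∫ u : ℝ, ((g u : ℝ) : ℂ)) = ((∫ u : ℝ, g u : ℝ) : ℂ) :=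
  integral_ofReal (𝕜 := ℂ)

lemma gaussian_cancel (σ : ℝ) (hσ : 0 < σ) (ψ : ℝ → ℝ) (hc : Continuous ψ)
    (hi : Integrable ψ)
    (h : ∀ τ : ℝ, (∫ u : ℝ, Real.exp (-(τ - u) ^ 2 / σ ^ 2) * ψ u) = 0) (u₀ : ℝ) :
    ψ u₀ = 0 := by
  set f : ℝ → ℂ := fun x => (ψ x : ℂ) with hfdef
  have hfc : Continuous f := Complex.continuous_ofReal.comp hc
  have hfi : Integrable f := hi.ofReal
  set A : ℝ → ℂ := fun ξ => ∫ s : ℝ, Complex.exp (↑(-2 * π * s * ξ) * Complex.I) *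
    ↑(Real.exp (-s ^ 2 / σ ^ 2)) with hAdef
  have hF : 𝓕 f = 0 := by
    funext ξ
    set F : ℝ × ℝ → ℂ := fun p => Complex.exp (↑(-2 * π * p.1 * ξ) * Complex.I) *
      (↑(Real.exp (-(p.1 - p.2) ^ 2 / σ ^ 2)) * ↑(ψ p.2)) with hFdef
    have hFcont : Continuous F := by fun_prop
    have hFint : Integrable F := by
      have hg : Integrable (fun p : ℝ × ℝ => Real.exp (-(1 / σ ^ 2) * p.1 ^ 2) * |ψ p.2|) :=
        (integrable_exp_neg_mul_sq (by positivity)).mul_prod hi.abs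
      have hshear : MeasurePreserving (fun p : ℝ × ℝ => (p.1 - p.2, p.2))
          ((volume : Measure ℝ).prod volume) ((volume : Measure ℝ).prod volume) :=
        measurePreserving_sub_prod volume volume
      have hg2 : Integrable (fun p : ℝ × ℝ => Real.exp (-(1 / σ ^ 2) * (p.1 - p.2) ^ 2) * |ψ p.2|) :=
        (hshear.integrable_comp hg.aestronglyMeasurable).2 hg
      refine hg2.mono' hFcont.aestronglyMeasurable ?_
      filter_upwards with p
      have : ‖F p‖ = Real.exp (-(p.1 - p.2) ^ 2 / σ ^ 2) * |ψ p.2| := by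
        rw [hFdef]
        simp only [norm_mul, Complex.norm_exp_ofReal_mul_I, one_mul,
          Complex.norm_real, Real.norm_eq_abs, Real.abs_exp]
      rw [this]
      have harg : -(p.1 - p.2) ^ 2 / σ ^ 2 = -(1 / σ ^ 2) * (p.1 - p.2) ^ 2 := by ring
      rw [harg]
    have swap : (∫ τ : ℝ, ∫ u : ℝ, F (τ, u)) = ∫ u : ℝ, ∫ τ : ℝ, F (τ, u) :=
      integral_integral_swap hFint
    have hL : (∫ τ : ℝ, ∫ u : ℝ, F (τ, u)) = 0 := by
      have hz : ∀ τ : ℝ, (∫ u : ℝ, F (τ, u)) = 0 := by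
        intro τ
        have : (∫ u : ℝ, F (τ, u)) = Complex.exp (↑(-2 * π * τ * ξ) * Complex.I) *
            ∫ u : ℝ, (↑(Real.exp (-(τ - u) ^ 2 / σ ^ 2) * ψ u) : ℂ) := by
          rw [← integral_const_mul]
          congr 1; funext v; rw [hFdef]; push_cast; ring
        rw [this, myOfReal_integral, h τ]
        simp
      simp only [hz, integral_zero]
    have hR : ∀ v : ℝ, (∫ τ : ℝ, F (τ, v)) =
        (Complex.exp (↑(-2 * π * v * ξ) * Complex.I) * ↑(ψ v)) * A ξ := by
      intro v
      have step1 : (∫ τ : ℝ, F (τ, v)) = ∫ s : ℝ, F (s + v, v) :=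
        (integral_add_right_eq_self (fun τ => F (τ, v)) v).symm
      rw [step1]
      have step2 : ∀ s : ℝ, F (s + v, v) = (Complex.exp (↑(-2 * π * v * ξ) * Complex.I) * ↑(ψ v)) *
          (Complex.exp (↑(-2 * π * s * ξ) * Complex.I) * ↑(Real.exp (-s ^ 2 / σ ^ 2))) := by
        intro s
        rw [hFdef]
        have h1 : ((-2 * π * (s + v) * ξ : ℝ) : ℂ) * Complex.I
            = ↑(-2 * π * v * ξ) * Complex.I + ↑(-2 * π * s * ξ) * Complex.I := by
          push_cast; ring
        have h2 : (-(s + v - v) ^ 2 / σ ^ 2) = (-s ^ 2 / σ ^ 2) := by ring_nf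
        simp only [h1, h2, Complex.exp_add]
        push_cast; ring
      simp only [step2]
      rw [integral_const_mul]
    rw [hL] at swap
    have : (∫ v : ℝ, (Complex.exp (↑(-2 * π * v * ξ) * Complex.I) * ↑(ψ v))) * A ξ = 0 := by
      calc (∫ v : ℝ, (Complex.exp (↑(-2 * π * v * ξ) * Complex.I) * ↑(ψ v))) * A ξ
          = ∫ v : ℝ, (Complex.exp (↑(-2 * π * v * ξ) * Complex.I) * ↑(ψ v)) * A ξ :=
            (integral_mul_const _ _).symm
        _ = ∫ v : ℝ, ∫ τ : ℝ, F (τ, v) := by simp only [hR]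
        _ = 0 := swap.symm
    have h0 : (∫ v : ℝ, (Complex.exp (↑(-2 * π * v * ξ) * Complex.I) * ↑(ψ v))) = 0 :=
      (mul_eq_zero.1 this).resolve_right (gaussA_ne_zero σ hσ ξ)
    rw [Real.fourier_real_eq_integral_exp_smul]
    simp only [smul_eq_mul, Pi.zero_apply]
    exact h0
  have h2 : f u₀ = 0 := by
    have hinv := hfi.fourierInv_fourier_eq (f := f) (v := u₀) (by
      rw [hF]; exact integrable_zero _ _ _) hfc.continuousAt
    rw [hF] at hinv
    rw [← hinv]
    simp [Real.fourierInv_eq]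
  simp only [hfdef] at h2
  exact_mod_cast h2

/-- For `σ > 0`, `G_σ(x) = σ^{−1}√π e^{−x²/σ²}`, and `γ` continuous with `e^{|ω|/2}γ(ω)`
integrable, the identity `(γ * G_σ)(τ) = e^{−τ}(γ * G_σ)(−τ)` holds for all `τ` iff
`γ(ω) = e^{−ω/2} φ(ω + σ²/4)` for some even continuous `φ`. -/
theorem convolution_balance_iff (σ : ℝ) (hσ : 0 < σ) (γ : ℝ → ℝ)
    (hcont : Continuous γ)
    (hint : Integrable (fun ω : ℝ => Real.exp (|ω| / 2) * γ ω)) :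
    (∀ τ : ℝ,
        (∫ ω : ℝ, γ ω * (σ⁻¹ * Real.sqrt Real.pi * Real.exp (-(τ - ω)^2 / σ^2)))
          = Real.exp (-τ) *
            ∫ ω : ℝ, γ ω * (σ⁻¹ * Real.sqrt Real.pi * Real.exp (-(-τ - ω)^2 / σ^2)))
      ↔ ∃ φ : ℝ → ℝ, Continuous φ ∧ (∀ x : ℝ, φ (-x) = φ x) ∧
          ∀ ω : ℝ, γ ω = Real.exp (-ω / 2) * φ (ω + σ^2 / 4) := by
  have hσ0 : σ ≠ 0 := hσ.ne'
  constructor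
  · -- hard direction
    intro h
    set φ : ℝ → ℝ := fun x => Real.exp ((x - σ^2/4) / 2) * γ (x - σ^2/4) with hφdef
    have hφc : Continuous φ := by fun_prop
    have hrepr : ∀ ω : ℝ, γ ω = Real.exp (-ω / 2) * φ (ω + σ^2 / 4) := by
      intro ω
      rw [hφdef]
      simp only
      rw [show ω + σ^2/4 - σ^2/4 = ω by ring, ← mul_assoc, ← Real.exp_add,
        show -ω/2 + ω/2 = 0 by ring, Real.exp_zero, one_mul]
    have hφi : Integrable φ := by
      have h1 : Integrable (fun x : ℝ => Real.exp (|x - σ^2/4| / 2) * γ (x - σ^2/4)) :=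
        hint.comp_sub_right (σ^2/4)
      refine h1.abs.mono' hφc.aestronglyMeasurable ?_
      filter_upwards with x
      rw [Real.norm_eq_abs, hφdef]
      simp only
      rw [abs_mul, abs_of_pos (Real.exp_pos _), abs_mul, abs_of_pos (Real.exp_pos _)]
      gcongr
      exact le_abs_self _
    -- the convolution of φ against the gaussian
    have claim : ∀ t : ℝ,
        (∫ ω : ℝ, γ ω * (σ⁻¹ * Real.sqrt Real.pi * Real.exp (-(t - ω)^2 / σ^2)))
          = (σ⁻¹ * Real.sqrt Real.pi * Real.exp (σ^2/16)) *
            (Real.exp (-t/2) * ∫ v : ℝ, Real.exp (-(t - v)^2 / σ^2) * φ v) := by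
      intro t
      have step1 : (∫ ω : ℝ, γ ω * (σ⁻¹ * Real.sqrt Real.pi * Real.exp (-(t - ω)^2 / σ^2)))
          = ∫ v : ℝ, γ (v - σ^2/4) *
              (σ⁻¹ * Real.sqrt Real.pi * Real.exp (-(t - (v - σ^2/4))^2 / σ^2)) :=
        (integral_sub_right_eq_self
          (fun ω => γ ω * (σ⁻¹ * Real.sqrt Real.pi * Real.exp (-(t - ω)^2 / σ^2))) (σ^2/4)).symm
      rw [step1, ← integral_const_mul, ← integral_const_mul]
      congr 1
      funext v
      rw [hrepr (v - σ^2/4), show v - σ^2/4 + σ^2/4 = v by ring]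
      have hexp : Real.exp (-(v - σ^2/4) / 2) * Real.exp (-(t - (v - σ^2/4))^2 / σ^2)
          = Real.exp (σ^2/16) * (Real.exp (-t/2) * Real.exp (-(t - v)^2 / σ^2)) := by
        rw [← Real.exp_add, ← Real.exp_add, ← Real.exp_add]
        congr 1
        field_simp
        ring
      linear_combination (σ⁻¹ * Real.sqrt Real.pi * φ v) * hexp
    have hC : (σ⁻¹ * Real.sqrt Real.pi * Real.exp (σ^2/16)) ≠ 0 := by positivity
    have hKsym : ∀ t : ℝ, (∫ v : ℝ, Real.exp (-(t - v)^2 / σ^2) * φ v)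
        = ∫ v : ℝ, Real.exp (-(t - v)^2 / σ^2) * φ (-v) := by
      intro t
      have e := h t
      rw [claim t, claim (-t)] at e
      have hexp2 : Real.exp (-t) * Real.exp (-(-t)/2) = Real.exp (-t/2) := by
        rw [← Real.exp_add]; congr 1; ring
      have e3 : (σ⁻¹ * Real.sqrt Real.pi * Real.exp (σ^2/16)) *
            (Real.exp (-t/2) * ∫ v : ℝ, Real.exp (-(t - v)^2 / σ^2) * φ v)
          = (σ⁻¹ * Real.sqrt Real.pi * Real.exp (σ^2/16)) *
            (Real.exp (-t/2) * ∫ v : ℝ, Real.exp (-(-t - v)^2 / σ^2) * φ v) := by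
        rw [e]
        linear_combination ((σ⁻¹ * Real.sqrt Real.pi * Real.exp (σ^2/16)) *
          (∫ v : ℝ, Real.exp (-(-t - v)^2 / σ^2) * φ v)) * hexp2
      have e4 : (∫ v : ℝ, Real.exp (-(t - v)^2 / σ^2) * φ v)
          = ∫ v : ℝ, Real.exp (-(-t - v)^2 / σ^2) * φ v :=
        mul_left_cancel₀ (Real.exp_ne_zero _) (mul_left_cancel₀ hC e3)
      rw [e4, ← integral_neg_eq_self (fun v => Real.exp (-(-t - v)^2 / σ^2) * φ v)]
      congr 1
      funext v
      rw [show -t - -v = -(t - v) by ring, neg_sq]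
    have hψ : ∀ t : ℝ, (∫ v : ℝ, Real.exp (-(t - v)^2 / σ^2) * (φ v - φ (-v))) = 0 := by
      intro t
      have hb : ∀ v : ℝ, ‖Real.exp (-(t - v)^2 / σ^2)‖ ≤ 1 := by
        intro v
        rw [Real.norm_eq_abs, abs_of_pos (Real.exp_pos _)]
        apply Real.exp_le_one_iff.2
        rw [neg_div]
        exact neg_nonpos.mpr (by positivity)
      have hmeas : AEStronglyMeasurable (fun v : ℝ => Real.exp (-(t - v)^2 / σ^2)) volume :=
        (Real.continuous_exp.comp
          (((continuous_const.sub continuous_id).pow 2).neg.div_const _)).aestronglyMeasurable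
      have hInt1 : Integrable (fun v : ℝ => Real.exp (-(t - v)^2 / σ^2) * φ v) :=
        hφi.bdd_mul hmeas (ae_of_all _ hb)
      have hInt2 : Integrable (fun v : ℝ => Real.exp (-(t - v)^2 / σ^2) * φ (-v)) :=
        hφi.comp_neg.bdd_mul hmeas (ae_of_all _ hb)
      simp only [mul_sub]
      rw [integral_sub hInt1 hInt2, ← hKsym t, sub_self]
    have heven : ∀ x : ℝ, φ (-x) = φ x := by
      intro x
      have := gaussian_cancel σ hσ (fun v => φ v - φ (-v))
        (hφc.sub (hφc.comp continuous_neg)) (hφi.sub hφi.comp_neg) hψ x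
      linarith
    exact ⟨φ, hφc, heven, hrepr⟩
  · -- easy direction
    rintro ⟨φ, hφc, hφe, hrepr⟩ τ
    have step1 : (∫ ω : ℝ, γ ω * (σ⁻¹ * Real.sqrt Real.pi * Real.exp (-(-τ - ω)^2 / σ^2)))
        = ∫ ω : ℝ, γ (-(ω + σ^2/2)) *
            (σ⁻¹ * Real.sqrt Real.pi * Real.exp (-(-τ - -(ω + σ^2/2))^2 / σ^2)) := by
      calc (∫ ω : ℝ, γ ω * (σ⁻¹ * Real.sqrt Real.pi * Real.exp (-(-τ - ω)^2 / σ^2)))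
          = ∫ ω : ℝ, γ (-ω) * (σ⁻¹ * Real.sqrt Real.pi * Real.exp (-(-τ - -ω)^2 / σ^2)) :=
            (integral_neg_eq_self
              (fun ω => γ ω * (σ⁻¹ * Real.sqrt Real.pi * Real.exp (-(-τ - ω)^2 / σ^2))) volume).symm
        _ = _ := (integral_add_right_eq_self
            (fun ω => γ (-ω) * (σ⁻¹ * Real.sqrt Real.pi * Real.exp (-(-τ - -ω)^2 / σ^2)))
            (σ^2/2)).symm
    rw [step1, ← integral_const_mul]
    congr 1
    funext ω
    rw [hrepr ω, hrepr (-(ω + σ^2/2)), show -(ω + σ^2/2) + σ^2/4 = -(ω + σ^2/4) by ring,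
      hφe (ω + σ^2/4)]
    have hexp : Real.exp (-ω / 2) * Real.exp (-(τ - ω)^2 / σ^2)
        = Real.exp (-τ) * (Real.exp (-(-(ω + σ^2/2)) / 2) *
            Real.exp (-(-τ - -(ω + σ^2/2))^2 / σ^2)) := by
      rw [← Real.exp_add, ← Real.exp_add, ← Real.exp_add]
      congr 1
      field_simp
      ring
    linear_combination (σ⁻¹ * Real.sqrt Real.pi * φ (ω + σ^2/4)) * hexp
end

section
/- Let σ > 0 and let A(ζ) = ∫_ℝ γ(ω) e^{−ω²/σ²} e^{−ζω/σ²} dω where γ(ω) = e^{−ω/2} φ(ω + σ²/4) for an even continuous φ with sufficient decay. Then A(−ζ) = e^{−ζ/2} A(ζ) for all ζ ∈ ℝ. -/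
open MeasureTheory

lemma gmb_pointwise (σ ζ : ℝ) (hσ : σ ≠ 0) (φ : ℝ → ℝ) (ω : ℝ) :
    Real.exp (-ω / 2) * φ (ω + σ^2 / 4) * Real.exp (-ω^2 / σ^2) *
      Real.exp (-ζ * ω / σ^2)
    = Real.exp (σ^2 / 16 + ζ / 4) *
        (φ (ω + σ^2 / 4) * Real.exp (-(ω + σ^2 / 4)^2 / σ^2) *
          Real.exp (-ζ * (ω + σ^2 / 4) / σ^2)) := by
  have h2 : σ^2 ≠ 0 := pow_ne_zero 2 hσ
  have key : Real.exp (-ω / 2) * Real.exp (-ω^2 / σ^2) * Real.exp (-ζ * ω / σ^2)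
      = Real.exp (σ^2 / 16 + ζ / 4) *
          (Real.exp (-(ω + σ^2 / 4)^2 / σ^2) * Real.exp (-ζ * (ω + σ^2 / 4) / σ^2)) := by
    rw [← Real.exp_add, ← Real.exp_add, ← Real.exp_add, ← Real.exp_add]
    congr 1
    field_simp
    ring
  linear_combination (φ (ω + σ^2 / 4)) * key

lemma gmb_half (σ ζ : ℝ) (hσ : σ ≠ 0) (φ γ : ℝ → ℝ)
    (hγ : ∀ ω : ℝ, γ ω = Real.exp (-ω / 2) * φ (ω + σ^2 / 4)) :
    (∫ ω : ℝ, γ ω * Real.exp (-ω^2 / σ^2) * Real.exp (-ζ * ω / σ^2))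
      = Real.exp (σ^2 / 16 + ζ / 4) *
          ∫ t : ℝ, φ t * Real.exp (-t^2 / σ^2) * Real.exp (-ζ * t / σ^2) := by
  have step1 : (∫ ω : ℝ, γ ω * Real.exp (-ω^2 / σ^2) * Real.exp (-ζ * ω / σ^2))
      = ∫ ω : ℝ, Real.exp (σ^2 / 16 + ζ / 4) *
          (φ (ω + σ^2 / 4) * Real.exp (-(ω + σ^2 / 4)^2 / σ^2) *
            Real.exp (-ζ * (ω + σ^2 / 4) / σ^2)) := by
    congr 1
    funext ω
    rw [hγ ω]
    exact gmb_pointwise σ ζ hσ φ ω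
  rw [step1, integral_const_mul]
  congr 1
  exact integral_add_right_eq_self
    (fun t : ℝ => φ t * Real.exp (-t^2 / σ^2) * Real.exp (-ζ * t / σ^2)) (σ^2 / 4)

/-- For `σ > 0`, `γ(ω) = e^{−ω/2} φ(ω + σ²/4)` with `φ` even and continuous (with enough decay
for the integrals to converge), the function `A(ζ) = ∫ γ(ω) e^{−ω²/σ²} e^{−ζω/σ²} dω`
satisfies `A(−ζ) = e^{−ζ/2} A(ζ)` for all `ζ`. -/
theorem gaussian_moment_balance (σ : ℝ) (hσ : 0 < σ) (φ γ : ℝ → ℝ)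
    (hφcont : Continuous φ) (hφeven : ∀ x : ℝ, φ (-x) = φ x)
    (hγ : ∀ ω : ℝ, γ ω = Real.exp (-ω / 2) * φ (ω + σ^2 / 4))
    (hint : ∀ ζ : ℝ, Integrable (fun ω : ℝ =>
      γ ω * Real.exp (-ω^2 / σ^2) * Real.exp (-ζ * ω / σ^2))) :
    ∀ ζ : ℝ,
      (∫ ω : ℝ, γ ω * Real.exp (-ω^2 / σ^2) * Real.exp (-(-ζ) * ω / σ^2))
        = Real.exp (-ζ / 2) *
          ∫ ω : ℝ, γ ω * Real.exp (-ω^2 / σ^2) * Real.exp (-ζ * ω / σ^2) := by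
  intro ζ
  have hσ' : σ ≠ 0 := ne_of_gt hσ
  rw [gmb_half σ (-ζ) hσ' φ γ hγ, gmb_half σ ζ hσ' φ γ hγ]
  have heven : (∫ t : ℝ, φ t * Real.exp (-t^2 / σ^2) * Real.exp (-(-ζ) * t / σ^2))
      = ∫ t : ℝ, φ t * Real.exp (-t^2 / σ^2) * Real.exp (-ζ * t / σ^2) := by
    have := integral_neg_eq_self
      (fun t : ℝ => φ t * Real.exp (-t^2 / σ^2) * Real.exp (-ζ * t / σ^2))
    rw [← this]
    congr 1
    funext t
    rw [hφeven t]
    ring_nf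
  rw [heven, ← mul_assoc, ← Real.exp_add]
  congr 1
  congr 1
  ring
end

section
/- Suppose P is a self-adjoint operator on a Hilbert space H with P ≥ 1, and A is a bounded operator. Then ‖P^{1/2} A* P^{−1}‖ ≤ ‖A P^{−1/2}‖ + ‖[P,A] P^{−1/2}‖, where all operators are assumed bounded on H; equivalently ‖A‖_{𝒟^{−1/2} → 𝒟^{−1}} ≤ ‖AP^{−1/2}‖ + ‖[P,A]P^{−1/2}‖ with 𝒟^s = D(P^s). -/
/-- For `P` self-adjoint with `P ≥ 1` on a Hilbert space (so the inverse `P⁻¹` with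
`‖P⁻¹‖ ≤ 1` and the square root `Q = P^{1/2}` with inverse `Q⁻¹ = P^{−1/2}` exist), and `A`
bounded, one has `‖P^{1/2} A* P^{−1}‖ ≤ ‖A P^{−1/2}‖ + ‖[P,A] P^{−1/2}‖`. -/
theorem sqrt_adjoint_inverse_bound {H : Type*} [NormedAddCommGroup H]
    [InnerProductSpace ℂ H] [CompleteSpace H]
    (P Q Pinv Qinv A : H →L[ℂ] H)
    (hPsa : IsSelfAdjoint P) (hPge : (P - 1).IsPositive)
    (hQpos : Q.IsPositive) (hQsq : Q * Q = P)
    (hPinv : P * Pinv = 1) (hPinv' : Pinv * P = 1) (hPinvnorm : ‖Pinv‖ ≤ 1)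
    (hQinv : Q * Qinv = 1) (hQinv' : Qinv * Q = 1) :
    ‖Q * ContinuousLinearMap.adjoint A * Pinv‖
      ≤ ‖A * Qinv‖ + ‖(P * A - A * P) * Qinv‖ := by
  have hQsa : IsSelfAdjoint Q := hQpos.isSelfAdjoint
  have hPinvsa : IsSelfAdjoint Pinv := by
    have h1 : ContinuousLinearMap.adjoint Pinv * P = 1 := by
      calc ContinuousLinearMap.adjoint Pinv * P
          = ContinuousLinearMap.adjoint Pinv * ContinuousLinearMap.adjoint P := by
            rw [hPsa.adjoint_eq]
        _ = ContinuousLinearMap.adjoint (P * Pinv) := by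
            rw [← ContinuousLinearMap.star_eq_adjoint, ← ContinuousLinearMap.star_eq_adjoint,
              ← ContinuousLinearMap.star_eq_adjoint, star_mul]
        _ = 1 := by rw [hPinv, ← ContinuousLinearMap.star_eq_adjoint, star_one]
    calc ContinuousLinearMap.adjoint Pinv
        = ContinuousLinearMap.adjoint Pinv * (P * Pinv) := by rw [hPinv, mul_one]
      _ = (ContinuousLinearMap.adjoint Pinv * P) * Pinv := by noncomm_ring
      _ = Pinv := by rw [h1, one_mul]
  -- pass to the adjoint
  have hadj : ContinuousLinearMap.adjoint (Q * ContinuousLinearMap.adjoint A * Pinv)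
      = Pinv * A * Q := by
    simp only [← ContinuousLinearMap.star_eq_adjoint, star_mul, star_star]
    rw [ContinuousLinearMap.star_eq_adjoint, ContinuousLinearMap.star_eq_adjoint,
      hPinvsa.adjoint_eq, hQsa.adjoint_eq]
    noncomm_ring
  have hnorm : ‖Q * ContinuousLinearMap.adjoint A * Pinv‖ = ‖Pinv * A * Q‖ := by
    rw [← hadj, LinearIsometryEquiv.norm_map]
  rw [hnorm]
  -- key identity
  have hPQinv : P * Qinv = Q := by rw [← hQsq, mul_assoc, hQinv, mul_one]
  have hkey : Pinv * A * Q = A * Qinv - Pinv * ((P * A - A * P) * Qinv) := by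
    have : Pinv * ((P * A - A * P) * Qinv)
        = (Pinv * P) * (A * Qinv) - Pinv * (A * (P * Qinv)) := by noncomm_ring
    rw [this, hPinv', hPQinv, one_mul]
    noncomm_ring
  rw [hkey]
  calc ‖A * Qinv - Pinv * ((P * A - A * P) * Qinv)‖
      ≤ ‖A * Qinv‖ + ‖Pinv * ((P * A - A * P) * Qinv)‖ := norm_sub_le _ _
    _ ≤ ‖A * Qinv‖ + ‖Pinv‖ * ‖(P * A - A * P) * Qinv‖ := by
        gcongr; exact norm_mul_le _ _
    _ ≤ ‖A * Qinv‖ + 1 * ‖(P * A - A * P) * Qinv‖ := by gcongr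
    _ = ‖A * Qinv‖ + ‖(P * A - A * P) * Qinv‖ := by rw [one_mul]
end

section
/- Let P be self-adjoint with P ≥ 1 on a Hilbert space H, and let g ∈ 𝒮(ℝ) be such that its Fourier transform ĝ extends holomorphically to the strip {t − iμ : t ∈ ℝ, μ ∈ (−ε, 1+ε)} with |ĝ(t − iμ)| ≤ C⟨t⟩^{−2} for μ ∈ [0,1]. Let A be bounded on H. Then e^{−P} ∫_ℝ e^{itP} A e^{−itP} ĝ(t) dt = ( ∫_ℝ e^{itP} A e^{−itP} ĝ(t − i) dt ) e^{−P}, where both integrals converge in operator norm; equivalently e^{−P} Â(g) = Â(e^{−•}g(•)) e^{−P} with Â(g) = ∫ Â(ω)g(ω)dω the operator Fourier transform paired with g. -/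
open MeasureTheory Complex

open Filter Topology Nat in
private lemma my_norm_exp_le {𝔸 : Type*} [NormedRing 𝔸] [NormedAlgebra ℂ 𝔸] [CompleteSpace 𝔸]
    (x : 𝔸) (hone : ‖(1:𝔸)‖ ≤ 1) : ‖NormedSpace.exp x‖ ≤ Real.exp ‖x‖ := by
  have h1 : NormedSpace.exp x = ∑' n : ℕ, (n !⁻¹ : ℂ) • x ^ n := by
    rw [NormedSpace.exp_eq_tsum ℂ]
  have hsum := NormedSpace.norm_expSeries_summable' (𝕂 := ℂ) x
  have hb : ∀ n : ℕ, ‖(n !⁻¹ : ℂ) • x ^ n‖ ≤ ‖x‖ ^ n / n ! := by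
    intro n
    rw [norm_smul]
    have h3 : ‖(n !⁻¹ : ℂ)‖ = ((n !: ℝ))⁻¹ := by
      rw [norm_inv]; simp
    rcases Nat.eq_zero_or_pos n with hn | hn
    · subst hn; simpa using hone
    · have h2 : ‖x ^ n‖ ≤ ‖x‖ ^ n := norm_pow_le' x hn
      rw [h3, div_eq_inv_mul]
      exact mul_le_mul_of_nonneg_left h2 (by positivity)
  calc ‖NormedSpace.exp x‖ ≤ ∑' n : ℕ, ‖(n !⁻¹ : ℂ) • x ^ n‖ :=
        h1 ▸ norm_tsum_le_tsum_norm hsum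
    _ ≤ ∑' n : ℕ, ‖x‖ ^ n / n ! :=
        Summable.tsum_le_tsum hb hsum (Real.summable_pow_div_factorial _)
    _ = Real.exp ‖x‖ := by rw [Real.exp_eq_exp_ℝ, NormedSpace.exp_eq_tsum_div]

private lemma my_norm_unitary_le {𝔸 : Type*} [NormedRing 𝔸] [StarRing 𝔸] [CStarRing 𝔸]
    (hone : ‖(1:𝔸)‖ ≤ 1) {u : 𝔸} (hu : u ∈ unitary 𝔸) : ‖u‖ ≤ 1 := by
  have h := CStarRing.norm_star_mul_self (x := u)
  rw [(Unitary.mem_iff.mp hu).1] at h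
  nlinarith [norm_nonneg u]

open Filter Topology in
private lemma my_strip_shift {E : Type*} [NormedAddCommGroup E] [NormedSpace ℂ E] [CompleteSpace E]
    (f : ℂ → E) (B : ℝ)
    (hd : ∀ z : ℂ, z.im ∈ Set.Icc (0:ℝ) 1 → DifferentiableAt ℂ f z)
    (hb : ∀ t μ : ℝ, μ ∈ Set.Icc (0:ℝ) 1 → ‖f (t + μ * Complex.I)‖ ≤ B / (1 + t ^ 2)) :
    Integrable (fun t : ℝ => f t) ∧ Integrable (fun t : ℝ => f (t + Complex.I)) ∧
      (∫ t : ℝ, f t) = ∫ t : ℝ, f (t + Complex.I) := by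
  have hcont : ∀ μ : ℝ, μ ∈ Set.Icc (0:ℝ) 1 → Continuous fun t : ℝ => f (t + μ * I) := by
    intro μ hμ
    refine continuous_iff_continuousAt.2 fun t => ?_
    have h1 : ContinuousAt f ((t : ℂ) + μ * I) := by
      refine (hd _ ?_).continuousAt
      simpa using hμ
    have h2 : ContinuousAt (fun t : ℝ => (t:ℂ) + μ * I) t := by fun_prop
    exact ContinuousAt.comp (f := fun t : ℝ => (t:ℂ) + μ * I) h1 h2
  have hint1 : Integrable (fun t : ℝ => f t) := by
    refine ((integrable_inv_one_add_sq.const_mul B).mono'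
      ((hcont 0 (by norm_num)).aestronglyMeasurable.congr ?_) ?_)
    · refine Filter.Eventually.of_forall fun t => ?_
      simp
    · refine Filter.Eventually.of_forall fun t => ?_
      have h := hb t 0 (by norm_num)
      rw [show ((t:ℂ) + (0:ℝ) * I) = (t:ℂ) by push_cast; ring] at h
      rw [div_eq_mul_inv] at h
      exact h
  have hint2 : Integrable (fun t : ℝ => f (t + I)) := by
    refine ((integrable_inv_one_add_sq.const_mul B).mono'
      ((hcont 1 (by norm_num)).aestronglyMeasurable.congr ?_) ?_)
    · refine Filter.Eventually.of_forall fun t => ?_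
      norm_num
    · refine Filter.Eventually.of_forall fun t => ?_
      have h := hb t 1 (by norm_num)
      rw [show ((t:ℂ) + (1:ℝ) * I) = (t:ℂ) + I by push_cast; ring] at h
      rw [div_eq_mul_inv] at h
      exact h
  refine ⟨hint1, hint2, ?_⟩
  have key : ∀ R : ℝ, (∫ x : ℝ in -R..R, f x) = (∫ x : ℝ in -R..R, f (x + I)) +
      (I • (∫ y : ℝ in (0:ℝ)..1, f (-R + y * I)) - I • (∫ y : ℝ in (0:ℝ)..1, f (R + y * I))) := by
    intro R
    have h := Complex.integral_boundary_rect_eq_zero_of_differentiableOn f (-R : ℂ) ((R : ℂ) + I)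
      (by
        intro z hz
        refine (hd z ?_).differentiableWithinAt
        have h2 := (Complex.mem_reProdIm.mp hz).2
        simpa [Set.uIcc_of_le, zero_le_one] using h2)
    simp only [neg_im, ofReal_im, neg_zero, ofReal_zero, zero_mul, add_zero, neg_re, ofReal_re,
      add_re, mul_re, I_re, mul_zero, I_im, ofReal_neg, add_im, mul_im, mul_one, zero_add,
      one_mul, sub_zero, one_im, one_re, ofReal_one] at h
    have h3 : ((∫ x : ℝ in -R..R, f x) + I • (∫ y : ℝ in (0:ℝ)..1, f (R + y * I))) -
        ((∫ x : ℝ in -R..R, f (x + I)) + I • (∫ y : ℝ in (0:ℝ)..1, f (-R + y * I))) = 0 := by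
      rw [← h]; abel
    have h4 := sub_eq_zero.mp h3
    have h5 : (∫ x : ℝ in -R..R, f x) =
        ((∫ x : ℝ in -R..R, f (x + I)) + I • (∫ y : ℝ in (0:ℝ)..1, f (-R + y * I)))
          - I • (∫ y : ℝ in (0:ℝ)..1, f (R + y * I)) := eq_sub_of_add_eq h4
    rw [h5]; abel
  have hvb : ∀ s : ℝ, ‖I • ∫ y : ℝ in (0:ℝ)..1, f (s + y * I)‖ ≤ B / (1 + s ^ 2) := by
    intro s
    rw [norm_smul, Complex.norm_I, one_mul]
    have h := intervalIntegral.norm_integral_le_of_norm_le_const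
      (C := B / (1 + s ^ 2)) (f := fun y : ℝ => f (s + y * I)) (a := (0:ℝ)) (b := 1) ?_
    · simpa using h
    · intro y hy
      have hy' : y ∈ Set.Icc (0:ℝ) 1 := by
        rw [Set.uIoc_of_le zero_le_one] at hy
        exact ⟨le_of_lt hy.1, hy.2⟩
      exact hb s y hy'
  have hv : Tendsto (fun R : ℝ => I • (∫ y : ℝ in (0:ℝ)..1, f (-R + y * I)) -
      I • (∫ y : ℝ in (0:ℝ)..1, f (R + y * I))) atTop (𝓝 0) := by
    have hlim : Tendsto (fun R : ℝ => 2 * (B / (1 + R ^ 2))) atTop (𝓝 0) := by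
      have h1 : Tendsto (fun R : ℝ => 1 + R ^ 2) atTop atTop :=
        tendsto_atTop_add_const_left _ 1 (tendsto_pow_atTop two_ne_zero)
      have h2 : Tendsto (fun R : ℝ => B / (1 + R ^ 2)) atTop (𝓝 0) :=
        Tendsto.div_atTop tendsto_const_nhds h1
      simpa using h2.const_mul 2
    refine squeeze_zero_norm (fun R => ?_) hlim
    have e1 := hvb (-R)
    have e2 := hvb R
    rw [show ((-R:ℝ):ℂ) = -(R:ℂ) by push_cast; ring] at e1
    rw [neg_pow, pow_two] at e1
    calc ‖_ - _‖ ≤ _ + _ := norm_sub_le _ _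
      _ ≤ B / (1 + R ^ 2) + B / (1 + R ^ 2) := by
          refine add_le_add ?_ e2
          simpa [pow_two] using e1
      _ = 2 * (B / (1 + R ^ 2)) := by ring
  have ha : Tendsto (fun R : ℝ => ∫ x : ℝ in -R..R, f x) atTop (𝓝 (∫ t : ℝ, f t)) :=
    intervalIntegral_tendsto_integral hint1 tendsto_neg_atTop_atBot tendsto_id
  have hb2 : Tendsto (fun R : ℝ => ∫ x : ℝ in -R..R, f (x + I)) atTop
      (𝓝 (∫ t : ℝ, f (t + I))) :=
    intervalIntegral_tendsto_integral hint2 tendsto_neg_atTop_atBot tendsto_id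
  have ha' : Tendsto (fun R : ℝ => ∫ x : ℝ in -R..R, f x) atTop
      (𝓝 ((∫ t : ℝ, f (t + I)) + 0)) := by
    have := hb2.add hv
    refine this.congr fun R => (key R).symm
  rw [add_zero] at ha'
  exact tendsto_nhds_unique ha ha'

set_option maxHeartbeats 2000000 in
set_option synthInstance.maxHeartbeats 200000 in
/-- Let `P` be self-adjoint with `P ≥ 1` on a Hilbert space, `A` bounded, and let `ĝ = G` be
holomorphic on the strip `{Im z ∈ (−1−ε, ε)}` with `|G(t − iμ)| ≤ C⟨t⟩^{−2}` for `μ ∈ [0,1]`.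
Then (both integrals converging in operator norm)
`e^{−P} ∫ e^{itP} A e^{−itP} G(t) dt = (∫ e^{itP} A e^{−itP} G(t−i) dt) e^{−P}`. -/
theorem exp_conj_operator_fourier {H : Type*} [NormedAddCommGroup H]
    [InnerProductSpace ℂ H] [CompleteSpace H]
    (P A : H →L[ℂ] H) (hPsa : IsSelfAdjoint P) (hPge : (P - 1).IsPositive)
    (G : ℂ → ℂ) (ε C : ℝ) (hε : 0 < ε)
    (hhol : DifferentiableOn ℂ G {z : ℂ | z.im ∈ Set.Ioo (-1 - ε) ε})
    (hbound : ∀ t μ : ℝ, μ ∈ Set.Icc (0:ℝ) 1 →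
      ‖G (t - μ * Complex.I)‖ ≤ C / (1 + t^2)) :
    Integrable (fun t : ℝ => G t •
        (NormedSpace.exp ((Complex.I * t) • P) * A
          * NormedSpace.exp ((-(Complex.I * t)) • P)))
    ∧ Integrable (fun t : ℝ => G (t - Complex.I) •
        (NormedSpace.exp ((Complex.I * t) • P) * A
          * NormedSpace.exp ((-(Complex.I * t)) • P)))
    ∧ NormedSpace.exp (-P) *
        (∫ t : ℝ, G t • (NormedSpace.exp ((Complex.I * t) • P) * A
            * NormedSpace.exp ((-(Complex.I * t)) • P)))
      = (∫ t : ℝ, G (t - Complex.I) • (NormedSpace.exp ((Complex.I * t) • P) * A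
            * NormedSpace.exp ((-(Complex.I * t)) • P))) *
          NormedSpace.exp (-P) := by
  have hone : ‖(1 : H →L[ℂ] H)‖ ≤ 1 := by
    rw [ContinuousLinearMap.one_def]; exact ContinuousLinearMap.norm_id_le
  let +nondep : NormedAlgebra ℚ (H →L[ℂ] H) := .restrictScalars ℚ ℂ _
  -- the operator exponential `u c = exp (c • P)`
  set u : ℂ → (H →L[ℂ] H) := fun c => NormedSpace.exp (c • P) with hu
  have huadd : ∀ c d : ℂ, u (c + d) = u c * u d := by
    intro c d
    have hc : Commute (c • P) (d • P) := by
      unfold Commute SemiconjBy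
      simp only [smul_mul_assoc, mul_smul_comm, smul_smul]
      rw [mul_comm c d]
    simpa [hu, add_smul] using NormedSpace.exp_add_of_commute hc
  have hu_unit : ∀ t : ℝ, ‖u (I * t)‖ ≤ 1 := by
    intro t
    have hsa : IsSelfAdjoint ((t:ℂ) • P) := by
      rw [IsSelfAdjoint, star_smul, hPsa.star_eq, Complex.star_def, Complex.conj_ofReal]
    have hm : NormedSpace.exp (I • ((t:ℂ) • P)) ∈ unitary (H →L[ℂ] H) :=
      NormedSpace.exp_mem_unitary_of_mem_skewAdjoint (hsa.smul_mem_skewAdjoint conj_I)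
    have h2 : u (I * t) = NormedSpace.exp (I • ((t:ℂ) • P)) := by
      rw [hu]; simp only []; rw [smul_smul]
    rw [h2]
    exact my_norm_unitary_le hone hm
  have hu_unit' : ∀ t : ℝ, ‖u (-(I * t))‖ ≤ 1 := by
    intro t
    have h := hu_unit (-t)
    rw [show (I * ((-t : ℝ):ℂ)) = -(I * t) by push_cast; ring] at h
    exact h
  have hu_norm : ∀ c : ℂ, ‖u c‖ ≤ Real.exp (‖c‖ * ‖P‖) := by
    intro c
    have h := my_norm_exp_le (c • P) hone
    rwa [norm_smul] at h
  -- triangle-type bound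
  have tri : ∀ (x y : H →L[ℂ] H) (bx by' : ℝ), ‖x‖ ≤ bx → ‖y‖ ≤ by' →
      ‖x * A * y‖ ≤ bx * (‖A‖ * by') := by
    intro x y bx by' hx hy
    have hbx : (0:ℝ) ≤ bx := le_trans (norm_nonneg x) hx
    calc ‖x * A * y‖ ≤ ‖x * A‖ * ‖y‖ := norm_mul_le _ _
      _ ≤ (‖x‖ * ‖A‖) * ‖y‖ := mul_le_mul_of_nonneg_right (norm_mul_le _ _) (norm_nonneg _)
      _ ≤ (bx * ‖A‖) * by' := by
          refine mul_le_mul (mul_le_mul_of_nonneg_right hx (norm_nonneg A)) hy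
            (norm_nonneg _) (by positivity)
      _ = bx * (‖A‖ * by') := by ring
  have hF_norm : ∀ t : ℝ, ‖u (I * t) * A * u (-(I * t))‖ ≤ ‖A‖ := by
    intro t
    have h := tri _ _ 1 1 (hu_unit t) (hu_unit' t)
    simpa using h
  have hC : 0 ≤ C := by
    have h := hbound 0 0 (by norm_num)
    have h2 : (0:ℝ) ≤ C / (1 + (0:ℝ)^2) := le_trans (norm_nonneg _) h
    simpa using h2
  -- differentiability and continuity of G
  have hSopen : IsOpen {z : ℂ | z.im ∈ Set.Ioo (-1 - ε) ε} :=
    IsOpen.preimage Complex.continuous_im isOpen_Ioo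
  have hGd : ∀ z : ℂ, z.im ∈ Set.Ioo (-1 - ε) ε → DifferentiableAt ℂ G z := fun z hz =>
    hhol.differentiableAt (hSopen.mem_nhds hz)
  have hGc0 : Continuous fun t : ℝ => G t := by
    refine continuous_iff_continuousAt.2 fun t => ?_
    have h1 : ContinuousAt G (t : ℂ) := by
      refine (hGd _ ?_).continuousAt
      simp only [Complex.ofReal_im]
      exact ⟨by linarith, hε⟩
    exact h1.comp Complex.continuous_ofReal.continuousAt
  have hGc1 : Continuous fun t : ℝ => G (t - I) := by
    refine continuous_iff_continuousAt.2 fun t => ?_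
    have h1 : ContinuousAt G ((t : ℂ) - I) := by
      refine (hGd _ ?_).continuousAt
      simp only [Complex.sub_im, Complex.ofReal_im, Complex.I_im]
      exact ⟨by linarith, by linarith⟩
    have h2 : ContinuousAt (fun t : ℝ => (t:ℂ) - I) t := by fun_prop
    exact ContinuousAt.comp (f := fun t : ℝ => (t:ℂ) - I) h1 h2
  -- continuity of the conjugated semigroup
  have hu_cont : Continuous u := by
    have h : Differentiable ℂ (fun c : ℂ => NormedSpace.exp (c • P)) := fun c =>
      (hasDerivAt_exp_smul_const P c).differentiableAt
    rw [hu]; exact h.continuous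
  have hFc : Continuous fun t : ℝ => u (I * t) * A * u (-(I * t)) := by
    have h1 : Continuous fun t : ℝ => u (I * t) :=
      hu_cont.comp (by fun_prop : Continuous fun t : ℝ => I * (t:ℂ))
    have h2 : Continuous fun t : ℝ => u (-(I * t)) :=
      hu_cont.comp (by fun_prop : Continuous fun t : ℝ => -(I * (t:ℂ)))
    exact (h1.mul continuous_const).mul h2
  -- integrability of the two stated integrands
  have hint1 : Integrable (fun t : ℝ => G t • (u (I * t) * A * u (-(I * t)))) := by
    refine ((integrable_inv_one_add_sq.const_mul (C * ‖A‖)).mono'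
      ((hGc0.smul hFc).aestronglyMeasurable) ?_)
    refine Filter.Eventually.of_forall fun t => ?_
    rw [norm_smul]
    have hg := hbound t 0 (by norm_num)
    rw [show ((t:ℂ) - (0:ℝ) * I) = (t:ℂ) by push_cast; ring] at hg
    calc ‖G t‖ * ‖u (I * t) * A * u (-(I * t))‖
        ≤ (C / (1 + t^2)) * ‖A‖ :=
          mul_le_mul hg (hF_norm t) (norm_nonneg _) (by positivity)
      _ = C * ‖A‖ * (1 + t^2)⁻¹ := by ring
  have hint2 : Integrable (fun t : ℝ => G (t - I) • (u (I * t) * A * u (-(I * t)))) := by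
    refine ((integrable_inv_one_add_sq.const_mul (C * ‖A‖)).mono'
      ((hGc1.smul hFc).aestronglyMeasurable) ?_)
    refine Filter.Eventually.of_forall fun t => ?_
    rw [norm_smul]
    have hg := hbound t 1 (by norm_num)
    rw [show ((t:ℂ) - (1:ℝ) * I) = (t:ℂ) - I by push_cast; ring] at hg
    calc ‖G (t - I)‖ * ‖u (I * t) * A * u (-(I * t))‖
        ≤ (C / (1 + t^2)) * ‖A‖ :=
          mul_le_mul hg (hF_norm t) (norm_nonneg _) (by positivity)
      _ = C * ‖A‖ * (1 + t^2)⁻¹ := by ring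
  refine ⟨hint1, hint2, ?_⟩
  -- the holomorphic integrand for the contour shift
  set Hf : ℂ → (H →L[ℂ] H) :=
    fun z => G (z - I) • (u (I * z) * A * u (-(I * z) - 1)) with hHf
  have hu_diff : Differentiable ℂ u := by
    rw [hu]; exact fun c => (hasDerivAt_exp_smul_const P c).differentiableAt
  have hd : ∀ z : ℂ, z.im ∈ Set.Icc (0:ℝ) 1 → DifferentiableAt ℂ Hf z := by
    intro z hz
    rw [hHf]
    have hzim : (z - I).im ∈ Set.Ioo (-1 - ε) ε := by
      simp only [Complex.sub_im, Complex.I_im]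
      exact ⟨by linarith [hz.1], by linarith [hz.2]⟩
    have h1 : DifferentiableAt ℂ (fun z : ℂ => G (z - I)) z :=
      DifferentiableAt.comp (g := G) (f := fun z : ℂ => z - I) z (hGd _ hzim)
        ((differentiable_id.sub_const I) z)
    have h2 : DifferentiableAt ℂ (fun z : ℂ => u (I * z)) z :=
      DifferentiableAt.comp (g := u) (f := fun z : ℂ => I * z) z (hu_diff _)
        ((differentiable_id.const_mul I) z)
    have h3 : DifferentiableAt ℂ (fun z : ℂ => u (-(I * z) - 1)) z :=
      DifferentiableAt.comp (g := u) (f := fun z : ℂ => -(I * z) - 1) z (hu_diff _)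
        (((differentiable_id.const_mul I).neg.sub_const 1) z)
    exact h1.smul ((h2.mul (differentiableAt_const A)).mul h3)
  set M : ℝ := Real.exp ‖P‖ * (‖A‖ * Real.exp ‖P‖) with hM
  have hb : ∀ t μ : ℝ, μ ∈ Set.Icc (0:ℝ) 1 →
      ‖Hf (t + μ * I)‖ ≤ (C * M) / (1 + t ^ 2) := by
    intro t μ hμ
    have hG : ‖G ((t:ℂ) + μ * I - I)‖ ≤ C / (1 + t^2) := by
      have h := hbound t (1 - μ) ⟨by linarith [hμ.2], by linarith [hμ.1]⟩
      rw [show ((t:ℂ) - ((1 - μ : ℝ):ℂ) * I) = ((t:ℂ) + μ * I - I) by push_cast; ring] at h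
      exact h
    have e1 : I * ((t:ℂ) + μ * I) = I * (t:ℂ) + (-(μ:ℂ)) := by
      linear_combination (μ:ℂ) * Complex.I_sq
    have e2 : -(I * ((t:ℂ) + μ * I)) - 1 = -(I * (t:ℂ)) + ((μ:ℂ) - 1) := by
      linear_combination (-(μ:ℂ)) * Complex.I_sq
    have n1 : ‖u (I * ((t:ℂ) + μ * I))‖ ≤ Real.exp ‖P‖ := by
      rw [e1, huadd]
      have hb1 : ‖u (-(μ:ℂ))‖ ≤ Real.exp ‖P‖ := by
        refine le_trans (hu_norm _) (Real.exp_le_exp.2 ?_)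
        have : ‖(-(μ:ℂ))‖ = |μ| := by
          rw [norm_neg, Complex.norm_real, Real.norm_eq_abs]
        rw [this]
        have : |μ| ≤ 1 := abs_le.2 ⟨by linarith [hμ.1], hμ.2⟩
        nlinarith [norm_nonneg P]
      calc ‖u (I * (t:ℂ)) * u (-(μ:ℂ))‖ ≤ ‖u (I * (t:ℂ))‖ * ‖u (-(μ:ℂ))‖ := norm_mul_le _ _
        _ ≤ 1 * Real.exp ‖P‖ :=
            mul_le_mul (hu_unit t) hb1 (norm_nonneg _) zero_le_one
        _ = Real.exp ‖P‖ := one_mul _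
    have n2 : ‖u (-(I * ((t:ℂ) + μ * I)) - 1)‖ ≤ Real.exp ‖P‖ := by
      rw [e2, huadd]
      have hb2 : ‖u ((μ:ℂ) - 1)‖ ≤ Real.exp ‖P‖ := by
        refine le_trans (hu_norm _) (Real.exp_le_exp.2 ?_)
        have h5 : ((μ:ℂ) - 1) = (((μ - 1 : ℝ)):ℂ) := by push_cast; ring
        rw [h5, Complex.norm_real, Real.norm_eq_abs]
        have : |μ - 1| ≤ 1 := abs_le.2 ⟨by linarith [hμ.1], by linarith [hμ.2]⟩
        nlinarith [norm_nonneg P]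
      calc ‖u (-(I * (t:ℂ))) * u ((μ:ℂ) - 1)‖ ≤ ‖u (-(I * (t:ℂ)))‖ * ‖u ((μ:ℂ) - 1)‖ :=
            norm_mul_le _ _
        _ ≤ 1 * Real.exp ‖P‖ :=
            mul_le_mul (hu_unit' t) hb2 (norm_nonneg _) zero_le_one
        _ = Real.exp ‖P‖ := one_mul _
    rw [hHf]
    simp only []
    rw [norm_smul]
    calc ‖G ((t:ℂ) + μ * I - I)‖ *
          ‖u (I * ((t:ℂ) + μ * I)) * A * u (-(I * ((t:ℂ) + μ * I)) - 1)‖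
        ≤ (C / (1 + t^2)) * M := by
          refine mul_le_mul hG ?_ (norm_nonneg _) (by positivity)
          rw [hM]
          exact tri _ _ _ _ n1 n2
      _ = (C * M) / (1 + t ^ 2) := by ring
  obtain ⟨hi1, hi2, heq⟩ := my_strip_shift Hf (C * M) hd hb
  -- endpoint identifications
  have ept0 : ∀ t : ℝ, Hf t =
      (G (t - I) • (u (I * t) * A * u (-(I * t)))) * NormedSpace.exp (-P) := by
    intro t
    rw [hHf]
    simp only []
    have e3 : -(I * (t:ℂ)) - 1 = -(I * (t:ℂ)) + (-1) := by ring
    rw [e3, huadd]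
    have e4 : u (-1) = NormedSpace.exp (-P) := by
      rw [hu]; simp only []; rw [neg_smul, one_smul]
    rw [e4]
    simp only [smul_mul_assoc, mul_assoc]
  have ept1 : ∀ t : ℝ, Hf ((t:ℂ) + I) =
      G t • (NormedSpace.exp (-P) * (u (I * t) * A * u (-(I * t)))) := by
    intro t
    rw [hHf]
    simp only []
    rw [add_sub_cancel_right]
    have e5 : I * ((t:ℂ) + I) = (-1) + I * (t:ℂ) := by
      linear_combination Complex.I_sq
    have e6 : -(I * ((t:ℂ) + I)) - 1 = -(I * (t:ℂ)) := by
      linear_combination -Complex.I_sq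
    rw [e6, e5, huadd]
    have e4 : u (-1) = NormedSpace.exp (-P) := by
      rw [hu]; simp only []; rw [neg_smul, one_smul]
    rw [e4]
    simp only [mul_assoc]
  -- pull exp(-P) through the integrals
  have hL : NormedSpace.exp (-P) *
      (∫ t : ℝ, G t • (u (I * t) * A * u (-(I * t)))) = ∫ t : ℝ, Hf ((t:ℂ) + I) := by
    have h := (ContinuousLinearMap.integral_comp_comm
      (ContinuousLinearMap.mul ℂ (H →L[ℂ] H) (NormedSpace.exp (-P))) hint1).symm
    simp only [ContinuousLinearMap.mul_apply'] at h
    rw [h]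
    refine integral_congr_ae (Filter.Eventually.of_forall fun t => ?_)
    show NormedSpace.exp (-P) * (G ↑t • (u (I * ↑t) * A * u (-(I * ↑t)))) = Hf ((t:ℂ) + I)
    rw [ept1 t, mul_smul_comm]
  have hR : (∫ t : ℝ, G (t - I) • (u (I * t) * A * u (-(I * t)))) *
      NormedSpace.exp (-P) = ∫ t : ℝ, Hf t := by
    have h := (ContinuousLinearMap.integral_comp_comm
      ((ContinuousLinearMap.mul ℂ (H →L[ℂ] H)).flip (NormedSpace.exp (-P))) hint2).symm
    simp only [ContinuousLinearMap.flip_apply, ContinuousLinearMap.mul_apply'] at h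
    rw [h]
    refine integral_congr_ae (Filter.Eventually.of_forall fun t => ?_)
    show (G (↑t - I) • (u (I * ↑t) * A * u (-(I * ↑t)))) * NormedSpace.exp (-P) = Hf (t:ℂ)
    rw [ept0 t]
  rw [hL, hR, ← heq]
end
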